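/- arXiv:2102.00101 — 2 statements merged into one kernel-verified Lean document; each statement's English description precedes it below -/
import Mathlib

section
/- For a positive continuous weight function M on [-1,1], define the weighted average ⟨φ⟩ = (1/2)∫_{-1}^{1} φ(ξ)M(ξ)dξ, and set a = ⟨ξ-ξ²⟩/⟨1-ξ⟩, b = ⟨ξ+ξ²⟩/⟨1+ξ⟩. Then -1 < a < b < 1. -/
open intervalIntegral

lemma aux_pos_integral (g : ℝ → ℝ) (hg : ContinuousOn g (Set.Icc (-1) 1))
    (h0 : ∀ x ∈ Set.Icc (-1:ℝ) 1, 0 ≤ g x)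
    (x₀ : ℝ) (hx₀ : x₀ ∈ Set.Icc (-1:ℝ) 1) (hgx : 0 < g x₀) :
    0 < ∫ x in (-1:ℝ)..1, g x := by
  have hcw : ContinuousWithinAt g (Set.Icc (-1) 1) x₀ := hg.continuousWithinAt hx₀
  have hev : {x | 0 < g x} ∈ nhdsWithin x₀ (Set.Icc (-1) 1) :=
    hcw (Ioi_mem_nhds hgx)
  rw [Metric.mem_nhdsWithin_iff] at hev
  obtain ⟨δ, hδ, hball⟩ := hev
  set u := max (-1 : ℝ) (x₀ - δ) with hu
  set v := min (1 : ℝ) (x₀ + δ) with hv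
  obtain ⟨hx1, hx2⟩ := hx₀
  have huv : u < v := by
    apply max_lt <;> apply lt_min <;> linarith
  have hu1 : (-1:ℝ) ≤ u := le_max_left _ _
  have hv1 : v ≤ 1 := min_le_left _ _
  have hsub : Set.Ioo u v ⊆ Set.Icc (-1:ℝ) 1 :=
    fun x hx => ⟨le_trans hu1 hx.1.le, le_trans hx.2.le hv1⟩
  have hpos : ∀ x ∈ Set.Ioo u v, 0 < g x := by
    intro x hx
    apply hball
    constructor
    · rw [Metric.mem_ball, Real.dist_eq, abs_lt]
      obtain ⟨h1, h2⟩ := hx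
      constructor
      · have := lt_of_le_of_lt (le_max_right (-1:ℝ) (x₀ - δ)) h1; linarith
      · have := lt_of_lt_of_le h2 (min_le_right (1:ℝ) (x₀ + δ)); linarith
    · exact hsub hx
  have hint : ∀ p q : ℝ, (-1:ℝ) ≤ p → p ≤ q → q ≤ 1 →
      IntervalIntegrable g MeasureTheory.volume p q := by
    intro p q hp hpq hq
    exact (hg.mono (by rw [Set.uIcc_of_le hpq]; exact Set.Icc_subset_Icc hp hq)).intervalIntegrable
  have h1 : (0:ℝ) < ∫ x in u..v, g x :=
    intervalIntegral_pos_of_pos_on (hint u v hu1 huv.le hv1) hpos huv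
  have h2 : (0:ℝ) ≤ ∫ x in (-1:ℝ)..u, g x := by
    apply intervalIntegral.integral_nonneg hu1
    intro x hx; exact h0 x ⟨hx.1, le_trans hx.2 (le_trans huv.le hv1)⟩
  have h3 : (0:ℝ) ≤ ∫ x in v..(1:ℝ), g x := by
    apply intervalIntegral.integral_nonneg hv1
    intro x hx; exact h0 x ⟨le_trans (le_trans hu1 huv.le) hx.1, hx.2⟩
  have hsplit1 : (∫ x in (-1:ℝ)..u, g x) + (∫ x in u..v, g x) = ∫ x in (-1:ℝ)..v, g x :=
    integral_add_adjacent_intervals (hint _ _ le_rfl hu1 (le_trans huv.le hv1))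
      (hint _ _ hu1 huv.le hv1)
  have hsplit2 : (∫ x in (-1:ℝ)..v, g x) + (∫ x in v..(1:ℝ), g x) = ∫ x in (-1:ℝ)..1, g x :=
    integral_add_adjacent_intervals (hint _ _ le_rfl (le_trans hu1 huv.le) hv1)
      (hint _ _ (le_trans hu1 huv.le) hv1 le_rfl)
  linarith

theorem endpoints_in_interval
    (M : ℝ → ℝ) (hMc : ContinuousOn M (Set.Icc (-1) 1))
    (hMpos : ∀ ξ ∈ Set.Icc (-1:ℝ) 1, 0 < M ξ)
    (avg : (ℝ → ℝ) → ℝ)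
    (havg : ∀ φ : ℝ → ℝ, avg φ = (1/2) * ∫ ξ in (-1:ℝ)..1, φ ξ * M ξ)
    (a b : ℝ)
    (ha : a = avg (fun ξ => ξ - ξ^2) / avg (fun ξ => 1 - ξ))
    (hb : b = avg (fun ξ => ξ + ξ^2) / avg (fun ξ => 1 + ξ)) :
    -1 < a ∧ a < b ∧ b < 1 := by
  have h0mem : (0:ℝ) ∈ Set.Icc (-1:ℝ) 1 := by constructor <;> norm_num
  have hIcc : Set.uIcc (-1:ℝ) 1 = Set.Icc (-1) 1 := Set.uIcc_of_le (by norm_num)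
  -- integrability
  have hcint : ∀ f : ℝ → ℝ, ContinuousOn f (Set.Icc (-1) 1) →
      IntervalIntegrable (fun x => f x * M x) MeasureTheory.volume (-1) 1 := by
    intro f hf
    exact ((hf.mul hMc).mono (by rw [hIcc])).intervalIntegrable
  have hMint := hcint (fun _ => 1) continuousOn_const
  have h1int := hcint (fun x => x) continuousOn_id
  have h2int := hcint (fun x => x^2) (continuousOn_id.pow 2)
  set I0 : ℝ := ∫ x in (-1:ℝ)..1, 1 * M x with hI0def
  set I1 : ℝ := ∫ x in (-1:ℝ)..1, x * M x with hI1def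
  set I2 : ℝ := ∫ x in (-1:ℝ)..1, x^2 * M x with hI2def
  -- positivity of key combinations
  have key : ∀ f : ℝ → ℝ, ContinuousOn f (Set.Icc (-1) 1) →
      (∀ x ∈ Set.Icc (-1:ℝ) 1, 0 ≤ f x) →
      (∀ x₀ ∈ Set.Icc (-1:ℝ) 1, 0 < f x₀ →
        0 < ∫ x in (-1:ℝ)..1, f x * M x) := by
    intro f hf hf0 x₀ hx₀ hfx
    apply aux_pos_integral _ (hf.mul hMc)
      (fun x hx => mul_nonneg (hf0 x hx) (hMpos x hx).le) x₀ hx₀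
    exact mul_pos hfx (hMpos x₀ hx₀)
  have hI0pos : 0 < I0 := key (fun _ => 1) continuousOn_const (fun _ _ => one_pos.le)
    0 h0mem one_pos
  have hApos : 0 < I0 - I1 := by
    have h := key (fun x => 1 - x) (by fun_prop)
      (fun x hx => by simp; linarith [hx.2]) 0 h0mem (by norm_num)
    have heq : (∫ x in (-1:ℝ)..1, (1 - x) * M x) = I0 - I1 := by
      rw [hI0def, hI1def, ← intervalIntegral.integral_sub hMint h1int]
      congr 1; funext x; ring
    linarith [heq ▸ h]
  have hBpos : 0 < I0 + I1 := by
    have h := key (fun x => 1 + x) (by fun_prop)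
      (fun x hx => by show (0:ℝ) ≤ 1 + x; linarith [hx.1]) 0 h0mem (by norm_num)
    have heq : (∫ x in (-1:ℝ)..1, (1 + x) * M x) = I0 + I1 := by
      rw [hI0def, hI1def, ← intervalIntegral.integral_add hMint h1int]
      congr 1; funext x; ring
    linarith [heq ▸ h]
  have hCpos : 0 < I0 - I2 := by
    have h := key (fun x => 1 - x^2) (by fun_prop)
      (fun x hx => by have h1 := hx.1; have h2 := hx.2; show (0:ℝ) ≤ 1 - x^2; nlinarith) 0 h0mem (by show (0:ℝ) < 1 - 0^2; norm_num)
    have heq : (∫ x in (-1:ℝ)..1, (1 - x^2) * M x) = I0 - I2 := by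
      rw [hI0def, hI2def, ← intervalIntegral.integral_sub hMint h2int]
      congr 1; funext x; ring
    linarith [heq ▸ h]
  -- strict Cauchy–Schwarz
  have hCS : I1 * I1 < I2 * I0 := by
    set c : ℝ := I1 / I0 with hcdef
    have hc : c * I0 = I1 := div_mul_cancel₀ _ hI0pos.ne'
    obtain ⟨x₀, hx₀mem, hx₀⟩ : ∃ x₀ ∈ Set.Icc (-1:ℝ) 1, 0 < (x₀ - c)^2 := by
      by_cases hc1 : c = 1
      · exact ⟨-1, by constructor <;> norm_num, by rw [hc1]; norm_num⟩
      · refine ⟨1, by constructor <;> norm_num, ?_⟩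
        have h : (1:ℝ) - c ≠ 0 := sub_ne_zero.mpr (fun h => hc1 h.symm)
        positivity
    have h := key (fun x => (x - c)^2) (by fun_prop)
      (fun x _ => sq_nonneg _) x₀ hx₀mem hx₀
    have heq : (∫ x in (-1:ℝ)..1, (x - c)^2 * M x) = I2 - 2*c*I1 + c^2*I0 := by
      rw [hI0def, hI1def, hI2def, ← intervalIntegral.integral_const_mul,
        ← intervalIntegral.integral_const_mul,
        ← intervalIntegral.integral_sub h2int ((h1int.const_mul (2*c))),
        ← intervalIntegral.integral_add (h2int.sub (h1int.const_mul (2*c)))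
          (hMint.const_mul (c^2))]
      congr 1; funext x; ring
    have hq : 0 < I2 - 2*c*I1 + c^2*I0 := heq ▸ h
    nlinarith [mul_pos hq hI0pos, hc]
  -- compute avg values
  have havg_eq : ∀ f : ℝ → ℝ, avg f = (1/2) * ∫ x in (-1:ℝ)..1, f x * M x := havg
  have e1 : avg (fun ξ => ξ - ξ^2) = (I1 - I2)/2 := by
    rw [havg_eq, hI1def, hI2def, ← intervalIntegral.integral_sub h1int h2int]
    rw [show (∫ x in (-1:ℝ)..1, (fun ξ => ξ - ξ^2) x * M x)
        = ∫ x in (-1:ℝ)..1, (x * M x - x^2 * M x) by congr 1; funext x; ring]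
    ring
  have e2 : avg (fun ξ => 1 - ξ) = (I0 - I1)/2 := by
    rw [havg_eq, hI0def, hI1def, ← intervalIntegral.integral_sub hMint h1int]
    rw [show (∫ x in (-1:ℝ)..1, (fun ξ => (1:ℝ) - ξ) x * M x)
        = ∫ x in (-1:ℝ)..1, (1 * M x - x * M x) by congr 1; funext x; ring]
    ring
  have e3 : avg (fun ξ => ξ + ξ^2) = (I1 + I2)/2 := by
    rw [havg_eq, hI1def, hI2def, ← intervalIntegral.integral_add h1int h2int]
    rw [show (∫ x in (-1:ℝ)..1, (fun ξ => ξ + ξ^2) x * M x)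
        = ∫ x in (-1:ℝ)..1, (x * M x + x^2 * M x) by congr 1; funext x; ring]
    ring
  have e4 : avg (fun ξ => 1 + ξ) = (I0 + I1)/2 := by
    rw [havg_eq, hI0def, hI1def, ← intervalIntegral.integral_add hMint h1int]
    rw [show (∫ x in (-1:ℝ)..1, (fun ξ => (1:ℝ) + ξ) x * M x)
        = ∫ x in (-1:ℝ)..1, (1 * M x + x * M x) by congr 1; funext x; ring]
    ring
  have ha' : a = (I1 - I2) / (I0 - I1) := by
    rw [ha, e1, e2]; rw [div_div_div_cancel_right₀]; norm_num
  have hb' : b = (I1 + I2) / (I0 + I1) := by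
    rw [hb, e3, e4]; rw [div_div_div_cancel_right₀]; norm_num
  refine ⟨?_, ?_, ?_⟩
  · rw [ha', lt_div_iff₀ hApos]; linarith
  · rw [ha', hb', div_lt_div_iff₀ hApos hBpos]; nlinarith
  · rw [hb', div_lt_one hBpos]; linarith
end

section
/- Accuracy of the scaling limiter: let w : I → ℝ be nonnegative, w_h a polynomial with positive weighted average w̄ = (∫_I M w_h)/(∫_I M) > 0, and w̃_h(x) = θ(w_h(x)-w̄)+w̄ with θ = min{1, w̄/(w̄ - min_S w_h)} for a finite set S ⊂ I with min_S w_h < w̄. Then for all x ∈ I, |w̃_h(x) - w_h(x)| ≤ (1-θ)·(|w_h(x)| + w̄), and in particular since 1-θ ≤ (min_S w_h)₋/(w̄ - min_S w_h) where t₋ = max(-t,0), the limiter deviation is controlled by the negative part of w_h on S. -/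
theorem limiter_accuracy
    (a b : ℝ) (hab : a < b)
    (M : ℝ → ℝ) (hMc : ContinuousOn M (Set.Icc a b))
    (hMpos : ∀ x ∈ Set.Icc a b, 0 < M x)
    (w : ℝ → ℝ) (hw : ∀ x ∈ Set.Icc a b, 0 ≤ w x)
    (wh : Polynomial ℝ)
    (wbar : ℝ)
    (hwbar : wbar = (∫ x in a..b, M x * wh.eval x) / (∫ x in a..b, M x))
    (hwbar_pos : 0 < wbar)
    (S : Finset ℝ) (hS : S.Nonempty) (hSsub : ∀ x ∈ S, x ∈ Set.Icc a b)
    (m : ℝ) (hm : m = S.inf' hS (fun x => wh.eval x)) (hmlt : m < wbar)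
    (θ : ℝ) (hθ : θ = min 1 (wbar / (wbar - m))) :
    (∀ x ∈ Set.Icc a b,
        |(θ * (wh.eval x - wbar) + wbar) - wh.eval x| ≤ (1 - θ) * (|wh.eval x| + wbar))
    ∧ 1 - θ ≤ max (-m) 0 / (wbar - m) := by
  have hden : 0 < wbar - m := by linarith
  have hθle : θ ≤ 1 := by rw [hθ]; exact min_le_left _ _
  have hθnn : 0 ≤ θ := by
    rw [hθ]
    exact le_min zero_le_one (le_of_lt (div_pos hwbar_pos hden))
  constructor
  · intro x hx
    have h1 : (θ * (wh.eval x - wbar) + wbar) - wh.eval x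
        = (θ - 1) * (wh.eval x - wbar) := by ring
    rw [h1, abs_mul, abs_of_nonpos (by linarith)]
    have h2 : |wh.eval x - wbar| ≤ |wh.eval x| + wbar := by
      calc |wh.eval x - wbar| ≤ |wh.eval x| + |wbar| := abs_sub _ _
        _ = |wh.eval x| + wbar := by rw [abs_of_pos hwbar_pos]
    have : 0 ≤ 1 - θ := by linarith
    calc -(θ - 1) * |wh.eval x - wbar| = (1 - θ) * |wh.eval x - wbar| := by ring
      _ ≤ (1 - θ) * (|wh.eval x| + wbar) := by
          exact mul_le_mul_of_nonneg_left h2 this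
  · rcases le_or_gt 0 m with hm0 | hm0
    · have : θ = 1 := by
        rw [hθ, min_eq_left]
        rw [le_div_iff₀ hden]; linarith
      rw [this]
      simp only [sub_self]
      positivity
    · have hθeq : θ = wbar / (wbar - m) := by
        rw [hθ, min_eq_right]
        rw [div_le_one hden]; linarith
      rw [hθeq, max_eq_left (by linarith)]
      have heq : 1 - wbar / (wbar - m) = -m / (wbar - m) := by
        field_simp
        ring
      rw [heq]
end
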